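/- If the unconstrained LASSO solution set contains more than one point, then it contains at least two distinct solutions with minimal support, i.e. at least two solutions x such that any solution x' with supp(x') ⊆ supp(x) equals x. -/

import Mathlib

open Matrix BigOperators

noncomputable def lassoObj {m N : ℕ} (lam : ℝ) (y : Fin m → ℝ)
    (A : Matrix (Fin m) (Fin N) ℝ) (x : Fin N → ℝ) : ℝ :=
  (∑ i, (A.mulVec x i - y i) ^ 2) + lam * ∑ j, |x j|

def lassoSol {m N : ℕ} (lam : ℝ) (y : Fin m → ℝ)
    (A : Matrix (Fin m) (Fin N) ℝ) : Set (Fin N → ℝ) :=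
  {x | ∀ z, lassoObj lam y A x ≤ lassoObj lam y A z}

/-- A LASSO solution with minimal support. -/
def MinimalSupportSol {m N : ℕ} (lam : ℝ) (y : Fin m → ℝ)
    (A : Matrix (Fin m) (Fin N) ℝ) (x : Fin N → ℝ) : Prop :=
  x ∈ lassoSol lam y A ∧
    ∀ x2 ∈ lassoSol lam y A, Function.support x2 ⊆ Function.support x → x2 = x

lemma abs_add_abs_sub_eq {a b : ℝ} (h : |b| ≤ |a|) : |a + b| + |a - b| = 2 * |a| := by
  rcases le_total 0 a with ha | ha
  · rw [abs_of_nonneg ha] at h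
    have hb := abs_le.mp h
    rw [abs_of_nonneg (by linarith : (0:ℝ) ≤ a + b),
      abs_of_nonneg (by linarith : (0:ℝ) ≤ a - b), abs_of_nonneg ha]
    ring
  · rw [abs_of_nonpos ha] at h
    have hb := abs_le.mp h
    rw [abs_of_nonpos (by linarith : a + b ≤ 0),
      abs_of_nonpos (by linarith : a - b ≤ 0), abs_of_nonpos ha]
    ring

lemma lasso_obj_eq {m N : ℕ} {lam : ℝ} {y : Fin m → ℝ} {A : Matrix (Fin m) (Fin N) ℝ}
    {u v : Fin N → ℝ} (hu : u ∈ lassoSol lam y A) (hv : v ∈ lassoSol lam y A) :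
    lassoObj lam y A u = lassoObj lam y A v :=
  le_antisymm (hu v) (hv u)

lemma lasso_mulVec_eq {m N : ℕ} {lam : ℝ} (hlam : 0 < lam) {y : Fin m → ℝ}
    {A : Matrix (Fin m) (Fin N) ℝ} {u v : Fin N → ℝ}
    (hu : u ∈ lassoSol lam y A) (hv : v ∈ lassoSol lam y A) :
    A.mulVec u = A.mulVec v := by
  set w : Fin N → ℝ := (2⁻¹ : ℝ) • (u + v) with hw
  have hmv : A.mulVec w = (2⁻¹ : ℝ) • (A.mulVec u + A.mulVec v) := by
    rw [hw, Matrix.mulVec_smul, Matrix.mulVec_add]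
  have hwi : ∀ i, A.mulVec w i = 2⁻¹ * (A.mulVec u i + A.mulVec v i) := by
    intro i; rw [hmv]; simp
  have hQ : ∑ i, (A.mulVec w i - y i) ^ 2 + ∑ i, ((A.mulVec u i - A.mulVec v i) / 2) ^ 2
      = (∑ i, (A.mulVec u i - y i) ^ 2 + ∑ i, (A.mulVec v i - y i) ^ 2) / 2 := by
    rw [← Finset.sum_add_distrib, ← Finset.sum_add_distrib, Finset.sum_div]
    refine Finset.sum_congr rfl fun i _ => ?_
    rw [hwi i]; ring
  have hP : ∑ j, |w j| ≤ (∑ j, |u j| + ∑ j, |v j|) / 2 := by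
    rw [← Finset.sum_add_distrib, Finset.sum_div]
    refine Finset.sum_le_sum fun j _ => ?_
    have hwj : w j = (u j + v j) / 2 := by
      simp [hw]; ring
    rw [hwj, abs_div, abs_two]
    have := abs_add_le (u j) (v j)
    linarith
  have h1 : lassoObj lam y A u ≤ lassoObj lam y A w := hu w
  have heq : lassoObj lam y A u = lassoObj lam y A v := lasso_obj_eq hu hv
  unfold lassoObj at h1 heq
  have hPm : lam * ∑ j, |w j| ≤ lam * ((∑ j, |u j| + ∑ j, |v j|) / 2) :=
    mul_le_mul_of_nonneg_left hP hlam.le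
  have hS : ∑ i, ((A.mulVec u i - A.mulVec v i) / 2) ^ 2 ≤ 0 := by linarith
  have hS0 : ∑ i, ((A.mulVec u i - A.mulVec v i) / 2) ^ 2 = 0 :=
    le_antisymm hS (Finset.sum_nonneg fun i _ => sq_nonneg _)
  have hall := (Finset.sum_eq_zero_iff_of_nonneg (fun i _ => sq_nonneg
    ((A.mulVec u i - A.mulVec v i) / 2))).1 hS0
  funext i
  have h2 := hall i (Finset.mem_univ i)
  have h3 : (A.mulVec u i - A.mulVec v i) / 2 = 0 := by
    exact (pow_eq_zero_iff two_ne_zero).mp h2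
  have : A.mulVec u i - A.mulVec v i = 0 := by linarith
  linarith

lemma lasso_abs_sum_eq {m N : ℕ} {lam : ℝ} (hlam : 0 < lam) {y : Fin m → ℝ}
    {A : Matrix (Fin m) (Fin N) ℝ} {u v : Fin N → ℝ}
    (hu : u ∈ lassoSol lam y A) (hv : v ∈ lassoSol lam y A) :
    ∑ j, |u j| = ∑ j, |v j| := by
  have h1 := lasso_obj_eq hu hv
  have h2 := lasso_mulVec_eq hlam hu hv
  unfold lassoObj at h1
  rw [h2] at h1
  have h3 : lam * ∑ j, |u j| = lam * ∑ j, |v j| := by linarith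
  exact mul_left_cancel₀ hlam.ne' h3

lemma lasso_line_ge {m N : ℕ} {lam : ℝ} (hlam : 0 < lam) {y : Fin m → ℝ}
    {A : Matrix (Fin m) (Fin N) ℝ} {u d : Fin N → ℝ}
    (hu : u ∈ lassoSol lam y A) (hd : A.mulVec d = 0) (t : ℝ) :
    ∑ j, |u j| ≤ ∑ j, |u j + t * d j| := by
  have hmv : A.mulVec (u + t • d) = A.mulVec u := by
    rw [Matrix.mulVec_add, Matrix.mulVec_smul, hd]; simp
  have h1 := hu (u + t • d)
  unfold lassoObj at h1
  rw [hmv] at h1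
  have h2 : ∑ j, |(u + t • d) j| = ∑ j, |u j + t * d j| :=
    Finset.sum_congr rfl fun j _ => by simp
  rw [h2] at h1
  have := le_of_mul_le_mul_left (by linarith : lam * ∑ j, |u j| ≤ lam * ∑ j, |u j + t * d j|) hlam
  exact this

lemma lasso_line_mem {m N : ℕ} {lam : ℝ} (hlam : 0 < lam) {y : Fin m → ℝ}
    {A : Matrix (Fin m) (Fin N) ℝ} {u d : Fin N → ℝ}
    (hu : u ∈ lassoSol lam y A) (hd : A.mulVec d = 0) (t : ℝ)
    (ht : ∑ j, |u j + t * d j| = ∑ j, |u j|) : u + t • d ∈ lassoSol lam y A := by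
  intro z
  have hmv : A.mulVec (u + t • d) = A.mulVec u := by
    rw [Matrix.mulVec_add, Matrix.mulVec_smul, hd]; simp
  have hobj : lassoObj lam y A (u + t • d) = lassoObj lam y A u := by
    unfold lassoObj
    rw [hmv]
    have h2 : ∑ j, |(u + t • d) j| = ∑ j, |u j + t * d j| :=
      Finset.sum_congr rfl fun j _ => by simp
    rw [h2, ht]
  rw [hobj]
  exact hu z

lemma lasso_reduce {m N : ℕ} {lam : ℝ} (hlam : 0 < lam) {y : Fin m → ℝ}
    {A : Matrix (Fin m) (Fin N) ℝ} {u v : Fin N → ℝ}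
    (hu : u ∈ lassoSol lam y A) (hv : v ∈ lassoSol lam y A) (hne : u ≠ v) :
    ∃ w ∈ lassoSol lam y A, (∀ j, u j = 0 → v j = 0 → w j = 0) ∧
      ∃ j, w j = 0 ∧ u j ≠ 0 := by
  set d : Fin N → ℝ := v - u with hdd
  have hd : A.mulVec d = 0 := by
    rw [hdd, Matrix.mulVec_sub, lasso_mulVec_eq hlam hu hv, sub_self]
  obtain ⟨j0, hj0⟩ : ∃ j, d j ≠ 0 := by
    by_contra hc
    push_neg at hc
    apply hne
    funext j
    have := hc j
    simp [hdd] at this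
    linarith [sub_eq_zero.mp this]
  set L := ∑ j, |u j| with hL
  set g : ℝ → ℝ := fun t => ∑ j, |u j + t * d j| with hg
  have hgL : ∀ t, L ≤ g t := fun t => lasso_line_ge hlam hu hd t
  set T : Set ℝ := {t | g t = L} with hT
  have h0T : (0 : ℝ) ∈ T := by
    show g 0 = L
    simp [hg, hL]
  have h1T : (1 : ℝ) ∈ T := by
    show g 1 = L
    have h1 : g 1 = ∑ j, |v j| := by
      refine Finset.sum_congr rfl fun j _ => ?_
      simp [hdd]
    rw [h1, hL]
    exact (lasso_abs_sum_eq hlam hu hv).symm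
  have hbdd : BddAbove T := by
    refine ⟨(L + |u j0|) / |d j0|, fun t ht => ?_⟩
    have hgt : g t = L := ht
    have h1 : |u j0 + t * d j0| ≤ L := by
      have h1' := Finset.single_le_sum (f := fun j => |u j + t * d j|)
        (fun j _ => abs_nonneg _) (Finset.mem_univ j0)
      exact le_of_le_of_eq h1' hgt
    have h3 : |t * d j0| ≤ |u j0 + t * d j0| + |u j0| := by
      have := abs_add_le (u j0 + t * d j0) (-(u j0))
      simpa using this
    have hdpos : 0 < |d j0| := abs_pos.mpr hj0
    calc t ≤ |t| := le_abs_self t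
      _ = |t * d j0| / |d j0| := by rw [abs_mul, mul_div_cancel_right₀ _ hdpos.ne']
      _ ≤ (L + |u j0|) / |d j0| := by
          gcongr
          linarith
  have hclosed : IsClosed T := by
    have hcont : Continuous g := by
      apply continuous_finset_sum
      intro j _
      exact (continuous_const.add (continuous_id.mul continuous_const)).abs
    exact isClosed_eq hcont continuous_const
  have hTne : T.Nonempty := ⟨0, h0T⟩
  set τ := sSup T with hτ
  have hτT : g τ = L := hclosed.csSup_mem hTne hbdd
  have hτ1 : (1 : ℝ) ≤ τ := le_csSup hbdd h1T
  have hτpos : (0 : ℝ) < τ := lt_of_lt_of_le one_pos hτ1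
  set w : Fin N → ℝ := u + τ • d with hwdef
  have hwj : ∀ j, w j = u j + τ * d j := fun j => by simp [hwdef]
  have hwSol : w ∈ lassoSol lam y A := lasso_line_mem hlam hu hd τ hτT
  have hzero : ∃ j, d j ≠ 0 ∧ w j = 0 := by
    by_contra hc
    push_neg at hc
    have hune : (Finset.univ : Finset (Fin N)).Nonempty := ⟨j0, Finset.mem_univ j0⟩
    set f : Fin N → ℝ := fun j => if d j = 0 then 1 else |w j| / |d j| with hf
    set ε := min 1 (Finset.univ.inf' hune f) with hε
    have hεpos : 0 < ε := by
      apply lt_min one_pos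
      rw [Finset.lt_inf'_iff]
      intro j _
      by_cases hdj : d j = 0
      · simp [hf, hdj]
      · simp only [hf, hdj, if_false]
        exact div_pos (abs_pos.mpr (hc j hdj)) (abs_pos.mpr hdj)
    have hε1 : ε ≤ 1 := min_le_left _ _
    have hkey : ∀ j, |w j + ε * d j| + |w j - ε * d j| = 2 * |w j| := by
      intro j
      by_cases hdj : d j = 0
      · rw [hdj]; ring_nf
      · have h2 : ε ≤ |w j| / |d j| := by
          refine le_trans (min_le_right _ _) ?_
          have := Finset.inf'_le f (Finset.mem_univ j)
          exact le_trans this (by simp [hf, hdj])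
        have hdpos : 0 < |d j| := abs_pos.mpr hdj
        have h1 : |ε * d j| ≤ |w j| := by
          rw [abs_mul, abs_of_pos hεpos]
          exact (le_div_iff₀ hdpos).mp h2
        exact abs_add_abs_sub_eq h1
    have hτε0 : 0 ≤ τ - ε := by linarith
    have hconv : g (τ - ε) ≤ L := by
      set θ := (τ - ε) / τ with hθ
      have hθ0 : 0 ≤ θ := div_nonneg hτε0 hτpos.le
      have hθ1 : θ ≤ 1 := by rw [hθ, div_le_one hτpos]; linarith
      have hθτ : θ * τ = τ - ε := div_mul_cancel₀ _ hτpos.ne'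
      calc g (τ - ε) = ∑ j, |(1 - θ) * u j + θ * (u j + τ * d j)| := by
            refine Finset.sum_congr rfl fun j _ => ?_
            have : u j + (τ - ε) * d j = (1 - θ) * u j + θ * (u j + τ * d j) := by
              rw [← hθτ]; ring
            rw [this]
        _ ≤ ∑ j, ((1 - θ) * |u j| + θ * |u j + τ * d j|) := by
            refine Finset.sum_le_sum fun j _ => ?_
            calc |(1 - θ) * u j + θ * (u j + τ * d j)|
                ≤ |(1 - θ) * u j| + |θ * (u j + τ * d j)| := abs_add_le _ _
              _ = (1 - θ) * |u j| + θ * |u j + τ * d j| := by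
                  rw [abs_mul, abs_mul, abs_of_nonneg (by linarith : (0:ℝ) ≤ 1 - θ),
                    abs_of_nonneg hθ0]
        _ = (1 - θ) * L + θ * g τ := by
            rw [Finset.sum_add_distrib, ← Finset.mul_sum, ← Finset.mul_sum]
        _ = L := by rw [hτT]; ring
    have hgτε : g (τ - ε) = L := le_antisymm hconv (hgL _)
    have hsum : g (τ + ε) + g (τ - ε) = 2 * g τ := by
      have hpt : ∀ j, |u j + (τ + ε) * d j| + |u j + (τ - ε) * d j|
          = 2 * |u j + τ * d j| := by
        intro j
        have h1 := hkey j
        rw [hwj j] at h1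
        convert h1 using 3 <;> ring
      calc g (τ + ε) + g (τ - ε)
          = ∑ j, (|u j + (τ + ε) * d j| + |u j + (τ - ε) * d j|) :=
            (Finset.sum_add_distrib).symm
        _ = ∑ j, 2 * |u j + τ * d j| := Finset.sum_congr rfl fun j _ => hpt j
        _ = 2 * g τ := (Finset.mul_sum _ _ _).symm
    have hgτε' : g (τ + ε) = L := by rw [hτT] at hsum; linarith
    have hmemT : τ + ε ∈ T := hgτε'
    have := le_csSup hbdd hmemT
    linarith
  obtain ⟨j1, hdj1, hwj1⟩ := hzero
  refine ⟨w, hwSol, ?_, j1, hwj1, ?_⟩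
  · intro j hju hjv
    have hdj : d j = 0 := by simp [hdd, hju, hjv]
    rw [hwj j, hdj, hju]; ring
  · intro h0
    rw [hwj j1, h0, zero_add] at hwj1
    rcases mul_eq_zero.mp hwj1 with h | h
    · linarith
    · exact hdj1 h

lemma lasso_mincard {m N : ℕ} {lam : ℝ} (hlam : 0 < lam) {y : Fin m → ℝ}
    {A : Matrix (Fin m) (Fin N) ℝ} {S : Finset (Fin N)} {w0 : Fin N → ℝ}
    (hw0 : w0 ∈ lassoSol lam y A) (hw0S : ∀ j, w0 j ≠ 0 → j ∈ S) :
    ∃ x, (x ∈ lassoSol lam y A ∧ ∀ j, x j ≠ 0 → j ∈ S) ∧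
      MinimalSupportSol lam y A x := by
  set F : Set (Fin N → ℝ) := {x | x ∈ lassoSol lam y A ∧ ∀ j, x j ≠ 0 → j ∈ S} with hF
  set c : (Fin N → ℝ) → ℕ := fun x => (Finset.univ.filter (fun j => x j ≠ 0)).card with hc
  have hne : (c '' F).Nonempty := ⟨c w0, w0, ⟨hw0, hw0S⟩, rfl⟩
  obtain ⟨x, hxF, hxc⟩ := Nat.sInf_mem hne
  refine ⟨x, hxF, hxF.1, ?_⟩
  intro x' hx' hsupp
  by_contra hne'
  have hsubsupp : ∀ j : Fin N, x' j ≠ 0 → x j ≠ 0 := fun j hj => hsupp hj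
  have hx'F : x' ∈ F := ⟨hx', fun j hj => hxF.2 j (hsubsupp j hj)⟩
  have hsub : Finset.univ.filter (fun j => x' j ≠ 0) ⊆ Finset.univ.filter (fun j => x j ≠ 0) := by
    intro j hj
    simp only [Finset.mem_filter, Finset.mem_univ, true_and] at hj ⊢
    exact hsubsupp j hj
  have hge : sInf (c '' F) ≤ c x' := Nat.sInf_le ⟨x', hx'F, rfl⟩
  have hle : c x ≤ c x' := by rw [hxc]; exact hge
  have heqs : Finset.univ.filter (fun j => x' j ≠ 0) = Finset.univ.filter (fun j => x j ≠ 0) :=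
    Finset.eq_of_subset_of_card_le hsub hle
  obtain ⟨w, hwSol, hw0', j1, hwj1, hxj1⟩ :=
    lasso_reduce hlam hxF.1 hx' (fun h => hne' h.symm)
  have hwsub : ∀ j : Fin N, w j ≠ 0 → x j ≠ 0 := by
    intro j hj
    rcases eq_or_ne (x j) 0 with hxj | hxj
    case inr => exact hxj
    exfalso
    have hx'j : x' j = 0 := by
      by_contra hx'j
      have : j ∈ Finset.univ.filter (fun j => x' j ≠ 0) := by
        simp [hx'j]
      rw [heqs] at this
      simp at this
      exact this hxj
    exact hj (hw0' j hxj hx'j)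
  have hwF : w ∈ F := ⟨hwSol, fun j hj => hxF.2 j (hwsub j hj)⟩
  have hwlt : c w < c x := by
    apply Finset.card_lt_card
    constructor
    · intro j hj
      simp only [Finset.mem_filter, Finset.mem_univ, true_and] at hj ⊢
      exact hwsub j hj
    · intro hcon
      have := hcon (by simp [hxj1] : j1 ∈ Finset.univ.filter (fun j => x j ≠ 0))
      simp at this
      exact this hwj1
  have hfin : sInf (c '' F) ≤ c w := Nat.sInf_le ⟨w, hwF, rfl⟩
  omega

/-- If the LASSO solution set has more than one point, it contains at least two
distinct solutions with minimal support. -/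
theorem lasso_two_minimal_support_solutions {m N : ℕ} (lam : ℝ) (hlam : 0 < lam)
    (y : Fin m → ℝ) (A : Matrix (Fin m) (Fin N) ℝ)
    (h : ∃ a ∈ lassoSol lam y A, ∃ b ∈ lassoSol lam y A, a ≠ b) :
    ∃ x1 x2 : Fin N → ℝ, MinimalSupportSol lam y A x1 ∧ MinimalSupportSol lam y A x2 ∧
      x1 ≠ x2 := by
  obtain ⟨a, ha, b, hb, hab⟩ := h
  obtain ⟨x1, hx1F, hx1min⟩ :=
    lasso_mincard hlam (S := Finset.univ) ha (fun j _ => Finset.mem_univ j)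
  obtain ⟨z, hz, hzne⟩ : ∃ z ∈ lassoSol lam y A, x1 ≠ z := by
    by_cases hax : x1 = a
    · exact ⟨b, hb, by rw [hax]; exact hab⟩
    · exact ⟨a, ha, hax⟩
  obtain ⟨w, hwSol, _, j1, hwj1, hx1j1⟩ := lasso_reduce hlam hx1min.1 hz hzne
  obtain ⟨x2, hx2F, hx2min⟩ :=
    lasso_mincard hlam (S := Finset.univ.filter (fun j => w j ≠ 0)) hwSol
      (fun j hj => by simp [hj])
  refine ⟨x1, x2, hx1min, hx2min, ?_⟩
  intro heq
  have hx2j1 : x2 j1 = 0 := by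
    by_contra hcon
    have := hx2F.2 j1 hcon
    simp at this
    exact this hwj1
  rw [heq] at hx1j1
  exact hx1j1 hx2j1
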